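/- Let (fₙ) be a sequence of functions ℝ → ℝ, each of which is a pointwise limit of continuous functions, and suppose fₙ converges uniformly to f. Then f is a pointwise limit of continuous functions. -/

import Mathlib

open Filter Topology

def BaireOne (f : ℝ → ℝ) : Prop :=
  ∃ g : ℕ → ℝ → ℝ, (∀ n, Continuous (g n)) ∧
    ∀ x, Tendsto (fun n => g n x) atTop (𝓝 (f x))

lemma baireOne_sub' {f g : ℝ → ℝ} (hf : BaireOne f) (hg : BaireOne g) :
    BaireOne (fun x => f x - g x) := by
  obtain ⟨u, hu, hul⟩ := hf
  obtain ⟨v, hv, hvl⟩ := hg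
  exact ⟨fun n x => u n x - v n x, fun n => (hu n).sub (hv n),
    fun x => (hul x).sub (hvl x)⟩

lemma geom_Ico_le' (K m : ℕ) : ∑ k ∈ Finset.Ico K m, (4:ℝ)*(1/2)^k ≤ 8*(1/2)^K := by
  rcases le_or_gt K m with h | h
  · rw [Finset.sum_Ico_eq_sum_range]
    have e : ∀ j ∈ Finset.range (m - K), (4:ℝ)*(1/2)^(K+j) = 4*(1/2)^K*(1/2)^j := by
      intro j _; rw [pow_add]; ring
    rw [Finset.sum_congr rfl e, ← Finset.mul_sum]
    have h2 := sum_geometric_two_le (m - K)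
    nlinarith [pow_pos (by norm_num : (0:ℝ) < 1/2) K]
  · rw [Finset.Ico_eq_empty (by omega)]
    rw [Finset.sum_empty]
    positivity

theorem stmt_2 (f : ℝ → ℝ) (fs : ℕ → ℝ → ℝ)
    (hB1 : ∀ n, BaireOne (fs n))
    (hunif : TendstoUniformly fs f atTop) :
    BaireOne f := by
  -- Step 1: extract approximating subsequence
  have key : ∀ k : ℕ, ∃ N : ℕ, ∀ x, |fs N x - f x| ≤ (1/2:ℝ)^k := by
    intro k
    have h := Metric.tendstoUniformly_iff.1 hunif ((1/2)^k) (by positivity)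
    obtain ⟨N, hN⟩ := h.exists
    exact ⟨N, fun x => by
      have := hN x
      rw [Real.dist_eq] at this
      rw [abs_sub_comm]
      linarith [this]⟩
  choose n hn using key
  -- Step 2: telescoping differences
  set u : ℕ → ℝ → ℝ := fun k x => fs (n (k+1)) x - fs (n k) x with hu_def
  have hu_bd : ∀ k x, |u k x| ≤ 2*(1/2:ℝ)^k := by
    intro k x
    have h1 := hn (k+1) x
    have h2 := hn k x
    have : |u k x| ≤ |fs (n (k+1)) x - f x| + |fs (n k) x - f x| := by
      simp only [hu_def]
      have : fs (n (k+1)) x - fs (n k) x =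
          (fs (n (k+1)) x - f x) - (fs (n k) x - f x) := by ring
      rw [this]
      exact abs_sub _ _
    have hp : (1/2:ℝ)^(k+1) ≤ (1/2:ℝ)^k := by
      apply pow_le_pow_of_le_one <;> norm_num
    linarith
  -- Step 3: Baire-1 approximants of u k, truncated
  have huB : ∀ k, BaireOne (u k) := fun k =>
    baireOne_sub' (hB1 (n (k+1))) (hB1 (n k))
  choose v' hv'c hv'l using huB
  set v : ℕ → ℕ → ℝ → ℝ :=
    fun k m x => max (-(2*(1/2:ℝ)^k)) (min (2*(1/2:ℝ)^k) (v' k m x)) with hv_def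
  have hvc : ∀ k m, Continuous (v k m) :=
    fun k m => continuous_const.max (continuous_const.min (hv'c k m))
  have hv_bd : ∀ k m x, |v k m x - u k x| ≤ 4*(1/2:ℝ)^k := by
    intro k m x
    have h1 : |v k m x| ≤ 2*(1/2:ℝ)^k := by
      rw [abs_le]
      constructor
      · exact le_max_left _ _
      · apply max_le
        · nlinarith [pow_pos (by norm_num : (0:ℝ) < 1/2) k]
        · exact min_le_left _ _
    have h2 := hu_bd k x
    have := abs_sub (v k m x) (u k x)
    linarith
  have hvl : ∀ k x, Tendsto (fun m => v k m x) atTop (𝓝 (u k x)) := by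
    intro k x
    have : Tendsto (fun m => v k m x) atTop
        (𝓝 (max (-(2*(1/2:ℝ)^k)) (min (2*(1/2:ℝ)^k) (u k x)))) :=
      tendsto_const_nhds.max (tendsto_const_nhds.min (hv'l k x))
    convert this using 2
    have h := hu_bd k x
    rw [abs_le] at h
    rw [min_eq_right h.2, max_eq_right]
    linarith [h.1]
  -- Step 4: approximants of fs (n 0)
  obtain ⟨w, hwc, hwl⟩ := hB1 (n 0)
  -- Step 5: define g
  refine ⟨fun m x => w m x + ∑ k ∈ Finset.range m, v k m x, ?_, ?_⟩
  · intro m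
    exact (hwc m).add (continuous_finset_sum _ fun k _ => hvc k m)
  · intro x
    rw [Metric.tendsto_atTop]
    intro ε hε
    -- choose K
    obtain ⟨K, hK⟩ : ∃ K : ℕ, (8:ℝ)*(1/2)^K < ε/4 := by
      obtain ⟨K, hK⟩ := exists_pow_lt_of_lt_one (show (0:ℝ) < ε/32 by linarith)
        (by norm_num : (1/2:ℝ) < 1)
      exact ⟨K, by linarith⟩
    have hev1 : ∀ᶠ m in atTop, ∀ k ∈ Finset.range K,
        |v k m x - u k x| < ε/(4*(K+1)) := by
      rw [Filter.eventually_all_finset]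
      intro k _
      have := hvl k x
      rw [Metric.tendsto_atTop] at this
      obtain ⟨N, hN⟩ := this (ε/(4*(K+1))) (by positivity)
      exact Filter.eventually_atTop.2 ⟨N, fun m hm => by
        have := hN m hm; rwa [Real.dist_eq] at this⟩
    have hev2 : ∀ᶠ m in atTop, |w m x - fs (n 0) x| < ε/4 := by
      have := hwl x
      rw [Metric.tendsto_atTop] at this
      obtain ⟨N, hN⟩ := this (ε/4) (by positivity)
      exact Filter.eventually_atTop.2 ⟨N, fun m hm => by
        have := hN m hm; rwa [Real.dist_eq] at this⟩
    have hev3 : ∀ᶠ m in atTop, K ≤ m := Filter.eventually_atTop.2 ⟨K, fun m hm => hm⟩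
    obtain ⟨N, hN⟩ := Filter.eventually_atTop.1 ((hev1.and hev2).and hev3)
    refine ⟨N, fun m hm => ?_⟩
    obtain ⟨⟨h1, h2⟩, h3⟩ := hN m hm
    rw [Real.dist_eq]
    -- telescoping
    have tel : ∑ k ∈ Finset.range m, u k x = fs (n m) x - fs (n 0) x := by
      simpa [hu_def] using Finset.sum_range_sub (fun k => fs (n k) x) m
    have decomp : w m x + ∑ k ∈ Finset.range m, v k m x - f x =
        (w m x - fs (n 0) x) + (∑ k ∈ Finset.range m, (v k m x - u k x))
          + (fs (n m) x - f x) := by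
      rw [Finset.sum_sub_distrib, tel]
      ring
    rw [decomp]
    have hA : |w m x - fs (n 0) x| < ε/4 := h2
    have hC : |fs (n m) x - f x| < ε/4 := by
      have := hn m x
      have hp : (1/2:ℝ)^m ≤ (1/2:ℝ)^K :=
        pow_le_pow_of_le_one (by norm_num) (by norm_num) h3
      have hp2 : (0:ℝ) < (1/2:ℝ)^K := by positivity
      linarith
    have hB : |∑ k ∈ Finset.range m, (v k m x - u k x)| < ε/2 := by
      have split : ∑ k ∈ Finset.range m, (v k m x - u k x) =
          ∑ k ∈ Finset.range K, (v k m x - u k x) +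
          ∑ k ∈ Finset.Ico K m, (v k m x - u k x) :=
        (Finset.sum_range_add_sum_Ico (fun k => v k m x - u k x) h3).symm
      rw [split]
      have b1 : |∑ k ∈ Finset.range K, (v k m x - u k x)| < ε/4 := by
        calc |∑ k ∈ Finset.range K, (v k m x - u k x)|
            ≤ ∑ k ∈ Finset.range K, |v k m x - u k x| :=
              Finset.abs_sum_le_sum_abs _ _
          _ ≤ ∑ k ∈ Finset.range K, ε/(4*(K+1)) := by
              apply Finset.sum_le_sum
              intro k hk
              exact le_of_lt (h1 k hk)
          _ = K * (ε/(4*(K+1))) := by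
              rw [Finset.sum_const, Finset.card_range, nsmul_eq_mul]
          _ < ((K:ℝ)+1) * (ε/(4*(K+1))) := by
              apply mul_lt_mul_of_pos_right (lt_add_one _)
              positivity
          _ = ε/4 := by
              field_simp
      have b2 : |∑ k ∈ Finset.Ico K m, (v k m x - u k x)| < ε/4 := by
        calc |∑ k ∈ Finset.Ico K m, (v k m x - u k x)|
            ≤ ∑ k ∈ Finset.Ico K m, |v k m x - u k x| :=
              Finset.abs_sum_le_sum_abs _ _
          _ ≤ ∑ k ∈ Finset.Ico K m, 4*(1/2:ℝ)^k := by
              apply Finset.sum_le_sum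
              intro k _
              exact hv_bd k m x
          _ ≤ 8*(1/2:ℝ)^K := geom_Ico_le' K m
          _ < ε/4 := hK
      calc |∑ k ∈ Finset.range K, (v k m x - u k x) +
            ∑ k ∈ Finset.Ico K m, (v k m x - u k x)|
          ≤ |∑ k ∈ Finset.range K, (v k m x - u k x)| +
            |∑ k ∈ Finset.Ico K m, (v k m x - u k x)| := abs_add_le _ _
        _ < ε/2 := by linarith
    have habs := abs_add_three (w m x - fs (n 0) x)
      (∑ k ∈ Finset.range m, (v k m x - u k x)) (fs (n m) x - f x)
    linarith
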